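/- Let f : ℝ^d → ℝ, let x^k, x^{k+1}, y^k ∈ ℝ^d, let α_k ∈ (0,1] and t_k, t_{k+1} > 0, and suppose x^{k+1} = α_k y^k + (1 − α_k) x^k. If x̂^k is a global minimizer of z ↦ f(z) + ‖z − x^k‖²/(2t_k) and x̂^{k+1} is a global minimizer of z ↦ f(z) + ‖z − x^{k+1}‖²/(2t_{k+1}), then f(x̂^{k+1}) − f(x̂^k) ≤ (1/(2t_{k+1})) · ( α_k ‖x̂^k − y^k‖² + (1 − α_k) ‖x̂^k − x^k‖² − ‖x̂^{k+1} − x^{k+1}‖² ). -/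
import Mathlib

lemma sq_norm_convex {d : ℕ} (u v : EuclideanSpace ℝ (Fin d)) {a : ℝ}
    (h0 : 0 ≤ a) (h1 : a ≤ 1) :
    ‖a • u + (1 - a) • v‖ ^ 2 ≤ a * ‖u‖ ^ 2 + (1 - a) * ‖v‖ ^ 2 := by
  have h1' : (0:ℝ) ≤ ‖u - v‖ ^ 2 := sq_nonneg _
  rw [norm_sub_sq_real] at h1'
  rw [norm_add_sq_real, norm_smul, norm_smul, real_inner_smul_left, real_inner_smul_right]
  simp only [Real.norm_eq_abs, abs_of_nonneg h0, abs_of_nonneg (by linarith : (0:ℝ) ≤ 1 - a)]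
  nlinarith [sq_nonneg (a * (1 - a)), mul_nonneg h0 (by linarith : (0:ℝ) ≤ 1 - a)]

theorem ipp_descent_step {d : ℕ} (f : EuclideanSpace ℝ (Fin d) → ℝ)
    (xk xk1 yk xhatk xhatk1 : EuclideanSpace ℝ (Fin d))
    (αk tk tk1 : ℝ) (hα0 : 0 < αk) (hα1 : αk ≤ 1) (htk : 0 < tk) (htk1 : 0 < tk1)
    (hupd : xk1 = αk • yk + (1 - αk) • xk)
    (hmin_k : ∀ z, f xhatk + ‖xhatk - xk‖ ^ 2 / (2 * tk) ≤ f z + ‖z - xk‖ ^ 2 / (2 * tk))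
    (hmin_k1 : ∀ z, f xhatk1 + ‖xhatk1 - xk1‖ ^ 2 / (2 * tk1)
      ≤ f z + ‖z - xk1‖ ^ 2 / (2 * tk1)) :
    f xhatk1 - f xhatk ≤ (1 / (2 * tk1)) *
      (αk * ‖xhatk - yk‖ ^ 2 + (1 - αk) * ‖xhatk - xk‖ ^ 2 - ‖xhatk1 - xk1‖ ^ 2) := by
  have h := hmin_k1 xhatk
  have hdecomp : xhatk - xk1 = αk • (xhatk - yk) + (1 - αk) • (xhatk - xk) := by
    rw [hupd]; module
  have hconv : ‖xhatk - xk1‖ ^ 2 ≤ αk * ‖xhatk - yk‖ ^ 2 + (1 - αk) * ‖xhatk - xk‖ ^ 2 := by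
    rw [hdecomp]; exact sq_norm_convex _ _ hα0.le hα1
  have e : (‖xhatk - xk1‖ ^ 2 - ‖xhatk1 - xk1‖ ^ 2) / (2 * tk1)
      = ‖xhatk - xk1‖ ^ 2 / (2 * tk1) - ‖xhatk1 - xk1‖ ^ 2 / (2 * tk1) := by ring
  calc f xhatk1 - f xhatk
      ≤ (‖xhatk - xk1‖ ^ 2 - ‖xhatk1 - xk1‖ ^ 2) / (2 * tk1) := by linarith
    _ = 1 / (2 * tk1) * (‖xhatk - xk1‖ ^ 2 - ‖xhatk1 - xk1‖ ^ 2) := by ring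
    _ ≤ 1 / (2 * tk1) * (αk * ‖xhatk - yk‖ ^ 2 + (1 - αk) * ‖xhatk - xk‖ ^ 2
        - ‖xhatk1 - xk1‖ ^ 2) := by
        apply mul_le_mul_of_nonneg_left _ (by positivity)
        linarith
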